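/- arXiv:1710.07034 — 7 statements merged into one kernel-verified Lean document; each statement's English description precedes it below -/
import Mathlib

section
/- Let n ≥ 1 and let t denote the variable X of the polynomial ring ℤ[t]. Let A_n and B_n be the n×n matrices over ℤ[t] with entries (A_n)_{ij} = 2 if i ≤ j and 1 if i > j, and (B_n)_{ij} = 1 if i ≤ j and 2 if i > j. Then det(t·A_n − B_nᵀ) = 2tⁿ − 1 in ℤ[t]. -/
open Polynomial

/-- Row-reduced form: row 0 is `(2X-1, 2X-2, …, 2X-2)`, row `i ≥ 1` is `-X·e_{i-1} + e_i`. -/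
noncomputable def detKAux_rowRed (m : ℕ) :
    Matrix (Fin (m + 2)) (Fin (m + 2)) (Polynomial ℤ) := fun i j =>
  if (i : ℕ) = 0 then (if (j : ℕ) = 0 then 2 * X - 1 else 2 * X - 2)
  else if (j : ℕ) = (i : ℕ) then 1 else if (j : ℕ) + 1 = (i : ℕ) then -X else 0

/-- Triangular form: row 0 is `(2X^n - 1, 0, …, 0)`, row `i ≥ 1` is `-X·e_{i-1} + e_i`. -/
noncomputable def detKAux_triRed (m : ℕ) :
    Matrix (Fin (m + 2)) (Fin (m + 2)) (Polynomial ℤ) := fun i j =>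
  if (i : ℕ) = 0 then (if (j : ℕ) = 0 then 2 * X ^ (m + 2) - 1 else 0)
  else if (j : ℕ) = (i : ℕ) then 1 else if (j : ℕ) + 1 = (i : ℕ) then -X else 0

/-- Coefficients expressing row 0 of `rowRed` as a combination of the rows of `triRed`. -/
noncomputable def detKAux_c (m : ℕ) : Fin (m + 2) → Polynomial ℤ := fun k =>
  if (k : ℕ) = 0 then 1 else 2 * X ^ (m + 2 - (k : ℕ)) - 2

lemma detKAux_tri_corner (m : ℕ) : detKAux_triRed m 0 0 = 2 * X ^ (m + 2) - 1 := by
  simp [detKAux_triRed]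

lemma detKAux_tri_diag (m : ℕ) (i : Fin (m + 2)) (h : (i : ℕ) ≠ 0) :
    detKAux_triRed m i i = 1 := by
  simp only [detKAux_triRed]
  split_ifs <;> first | rfl | (exfalso; omega) | simp_all

lemma detKAux_tri_sub (m : ℕ) (i j : Fin (m + 2)) (h : (j : ℕ) + 1 = (i : ℕ)) :
    detKAux_triRed m i j = -X := by
  simp only [detKAux_triRed]
  split_ifs <;> first | rfl | (exfalso; omega) | simp_all

lemma detKAux_tri_zero (m : ℕ) (i j : Fin (m + 2)) (h1 : (j : ℕ) ≠ (i : ℕ))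
    (h2 : (j : ℕ) + 1 ≠ (i : ℕ)) : detKAux_triRed m i j = 0 := by
  simp only [detKAux_triRed]
  split_ifs <;> first | rfl | (exfalso; omega) | simp_all

lemma detKAux_c_zero (m : ℕ) : detKAux_c m 0 = 1 := by simp [detKAux_c]

lemma detKAux_c_pos (m : ℕ) (k : Fin (m + 2)) (h : (k : ℕ) ≠ 0) :
    detKAux_c m k = 2 * X ^ (m + 2 - (k : ℕ)) - 2 := by
  simp only [detKAux_c]
  rw [if_neg h]

lemma detKAux_triRed_det (m : ℕ) :
    (detKAux_triRed m).det = 2 * X ^ (m + 2) - 1 := by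
  have htri : (detKAux_triRed m).BlockTriangular OrderDual.toDual := by
    intro i j hij
    have hij' : (i : ℕ) < (j : ℕ) := hij
    exact detKAux_tri_zero m i j (by omega) (by omega)
  rw [Matrix.det_of_lowerTriangular _ htri]
  have h : ∀ i : Fin (m + 2), detKAux_triRed m i i =
      if (i : ℕ) = 0 then 2 * X ^ (m + 2) - 1 else 1 := by
    intro i
    by_cases hi : (i : ℕ) = 0
    · have : i = 0 := Fin.ext (by simpa using hi)
      rw [this]
      simpa using detKAux_tri_corner m
    · rw [if_neg hi]
      exact detKAux_tri_diag m i hi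
  calc (∏ i : Fin (m + 2), detKAux_triRed m i i)
      = ∏ i : Fin (m + 2), (if (i : ℕ) = 0 then 2 * X ^ (m + 2) - 1 else 1) :=
        Finset.prod_congr rfl fun i _ => h i
    _ = 2 * X ^ (m + 2) - 1 := by
        rw [Fin.prod_univ_succ]
        simp

lemma detKAux_rowRed_det (m : ℕ) :
    (detKAux_rowRed m).det = (detKAux_triRed m).det := by
  have key : detKAux_rowRed m =
      (detKAux_triRed m).updateRow 0 (∑ k, detKAux_c m k • detKAux_triRed m k) := by
    ext i j
    rw [Matrix.updateRow_apply]
    by_cases hi : i = 0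
    · rw [if_pos hi, hi, Finset.sum_apply]
      simp only [Pi.smul_apply, smul_eq_mul]
      by_cases hj : (j : ℕ) = 0
      · have hj0 : j = 0 := Fin.ext (by simpa using hj)
        rw [hj0]
        have hne01 : (0 : Fin (m + 2)) ≠ 1 := by
          intro h
          have := congrArg Fin.val h
          simp at this
        have hterm : ∀ k : Fin (m + 2), detKAux_c m k * detKAux_triRed m k 0 =
            (if k = 0 then 2 * X ^ (m + 2) - 1 else 0) +
            (if k = (1 : Fin (m + 2)) then (2 * X ^ (m + 1) - 2) * (-X) else 0) := by
          intro k
          by_cases hk0 : k = 0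
          · rw [hk0, if_pos rfl, if_neg hne01, detKAux_c_zero, detKAux_tri_corner]
            ring
          · by_cases hk1 : k = 1
            · have hv : ((1 : Fin (m + 2)) : ℕ) = 1 := rfl
              rw [hk1, if_neg (fun h => hne01 h.symm), if_pos rfl,
                detKAux_c_pos m 1 (by omega),
                detKAux_tri_sub m 1 0 (by simp), hv]
              have he : m + 2 - 1 = m + 1 := by omega
              rw [he]
              ring
            · have hv0 : (k : ℕ) ≠ 0 := fun h => hk0 (Fin.ext (by simpa using h))
              have hv1 : (k : ℕ) ≠ 1 := fun h => hk1 (Fin.ext (by simpa using h))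
              rw [detKAux_tri_zero m k 0 (by omega) (by omega),
                if_neg hk0, if_neg hk1]
              ring
        rw [Finset.sum_congr rfl fun k _ => hterm k, Finset.sum_add_distrib,
          Finset.sum_ite_eq' Finset.univ (0 : Fin (m + 2)),
          Finset.sum_ite_eq' Finset.univ (1 : Fin (m + 2))]
        simp only [Finset.mem_univ, if_true]
        have hrow : detKAux_rowRed m 0 0 = 2 * X - 1 := by
          simp [detKAux_rowRed]
        rw [hrow]
        ring
      · -- j ≥ 1
        by_cases hjl : (j : ℕ) < m + 1
        · -- j not last : two nonzero terms, at k = j and k = j+1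
          have hjb : (j : ℕ) + 1 < m + 2 := by omega
          set j1 : Fin (m + 2) := ⟨(j : ℕ) + 1, hjb⟩ with hj1
          have hj1v : (j1 : ℕ) = (j : ℕ) + 1 := rfl
          have hjj1 : j ≠ j1 := by
            intro h
            have := congrArg Fin.val h
            rw [hj1v] at this
            omega
          have hterm : ∀ k : Fin (m + 2), detKAux_c m k * detKAux_triRed m k j =
              (if k = j then 2 * X ^ (m + 2 - (j : ℕ)) - 2 else 0) +
              (if k = j1 then (2 * X ^ (m + 1 - (j : ℕ)) - 2) * (-X) else 0) := by
            intro k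
            by_cases hkj : k = j
            · rw [hkj, if_pos rfl, if_neg hjj1, detKAux_c_pos m j hj,
                detKAux_tri_diag m j hj]
              ring
            · by_cases hkj1 : k = j1
              · rw [hkj1, if_neg (fun h => hjj1 h.symm), if_pos rfl,
                  detKAux_c_pos m j1 (by rw [hj1v]; omega),
                  detKAux_tri_sub m j1 j (by rw [hj1v]), hj1v]
                have he2 : m + 2 - ((j : ℕ) + 1) = m + 1 - (j : ℕ) := by omega
                rw [he2]
                ring
              · have hv1 : (k : ℕ) ≠ (j : ℕ) := fun h => hkj (Fin.ext h)
                have hv2 : (k : ℕ) ≠ (j : ℕ) + 1 := fun h => hkj1 (Fin.ext h)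
                rw [detKAux_tri_zero m k j (fun h => hv1 h.symm) (fun h => hv2 h.symm),
                  if_neg hkj, if_neg hkj1]
                ring
          rw [Finset.sum_congr rfl fun k _ => hterm k, Finset.sum_add_distrib,
            Finset.sum_ite_eq' Finset.univ j, Finset.sum_ite_eq' Finset.univ j1]
          simp only [Finset.mem_univ, if_true]
          have hrow : detKAux_rowRed m 0 j = 2 * X - 2 := by
            simp [detKAux_rowRed, hj]
          rw [hrow]
          have he : m + 2 - (j : ℕ) = (m + 1 - (j : ℕ)) + 1 := by omega
          rw [he]
          ring
        · -- j is the last index : single nonzero term at k = j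
          have hterm : ∀ k : Fin (m + 2), detKAux_c m k * detKAux_triRed m k j =
              (if k = j then 2 * X - 2 else 0) := by
            intro k
            by_cases hkj : k = j
            · rw [hkj, if_pos rfl, detKAux_c_pos m j hj, detKAux_tri_diag m j hj]
              have : m + 2 - (j : ℕ) = 1 := by omega
              rw [this, pow_one]
              ring
            · have hv1 : (k : ℕ) ≠ (j : ℕ) := fun h => hkj (Fin.ext h)
              rw [detKAux_tri_zero m k j (fun h => hv1 h.symm) (by omega), if_neg hkj]
              ring
          rw [Finset.sum_congr rfl fun k _ => hterm k,
            Finset.sum_ite_eq' Finset.univ j]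
          simp only [Finset.mem_univ, if_true]
          simp [detKAux_rowRed, hj]
    · rw [if_neg hi]
      have hiv : (i : ℕ) ≠ 0 := fun h => hi (Fin.ext (by simpa using h))
      simp only [detKAux_rowRed, detKAux_triRed, if_neg hiv]
  rw [key, Matrix.det_updateRow_sum, detKAux_c_zero, one_smul]

/-- `det (t·Aₙ − Bₙᵀ) = 2tⁿ − 1` for the Seifert-matrix blocks of `K_{n,m}`. -/
theorem det_tA_sub_Bt (n : ℕ) (hn : 1 ≤ n)
    (A B : Matrix (Fin n) (Fin n) (Polynomial ℤ))
    (hA : ∀ i j, A i j = if i ≤ j then 2 else 1)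
    (hB : ∀ i j, B i j = if i ≤ j then 1 else 2) :
    ((X : Polynomial ℤ) • A - B.transpose).det = 2 * X ^ n - 1 := by
  match n, hn with
  | 1, _ =>
    rw [Matrix.det_fin_one, Matrix.sub_apply, Matrix.smul_apply, Matrix.transpose_apply,
      hA, hB, if_pos (le_refl (0 : Fin 1)), if_pos (le_refl (0 : Fin 1)), smul_eq_mul]
    ring
  | (m + 2), _ =>
    set M : Matrix (Fin (m + 2)) (Fin (m + 2)) (Polynomial ℤ) :=
      (X : Polynomial ℤ) • A - B.transpose with hMdef
    have hM : ∀ i j : Fin (m + 2), M i j =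
        if (i : ℕ) < (j : ℕ) then 2 * X - 2
        else if (i : ℕ) = (j : ℕ) then 2 * X - 1 else X - 1 := by
      intro i j
      simp only [hMdef, Matrix.sub_apply, Matrix.smul_apply, Matrix.transpose_apply, hA, hB,
        smul_eq_mul, Fin.le_def]
      split_ifs <;> first | ring1 | (exfalso; omega) | simp_all
    have step1 : M.det = (detKAux_rowRed m).det := by
      apply Matrix.det_eq_of_forall_row_eq_smul_add_pred (c := fun _ => (1 : Polynomial ℤ))
      · intro j
        rw [hM]
        simp only [detKAux_rowRed, Fin.val_zero]
        split_ifs <;> first | ring1 | (exfalso; omega) | (simp_all <;> exact ne_of_gt ‹_›)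
      · intro i j
        rw [hM, hM]
        have hs : ((Fin.succ i : Fin (m + 2)) : ℕ) = (i : ℕ) + 1 := rfl
        have hc : ((Fin.castSucc i : Fin (m + 2)) : ℕ) = (i : ℕ) := rfl
        simp only [detKAux_rowRed, hs, hc, one_mul]
        split_ifs <;> first | ring1 | (exfalso; omega) | simp_all
    rw [step1, detKAux_rowRed_det, detKAux_triRed_det]
end

section
/- Let n ≥ 1 and let t denote the variable X of the polynomial ring ℤ[t]. Let A_n and B_n be the n×n matrices over ℤ[t] with entries (A_n)_{ij} = 2 if i ≤ j and 1 if i > j, and (B_n)_{ij} = 1 if i ≤ j and 2 if i > j. Then det(A_n − t·B_nᵀ) = 2 − tⁿ in ℤ[t]. -/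
open Polynomial Matrix

noncomputable def Mm (n : ℕ) : Matrix (Fin n) (Fin n) (Polynomial ℤ) :=
  .of fun i j => if (i:ℕ) < (j:ℕ) then 2 - 2*X else if (i:ℕ) = (j:ℕ) then 2 - X else 1 - X

noncomputable def Nm (n : ℕ) : Matrix (Fin n) (Fin n) (Polynomial ℤ) :=
  .of fun i j => if (j:ℕ) = 0 then 1 - X else
    if (i:ℕ) < (j:ℕ) then 2 - 2*X else if (i:ℕ) = (j:ℕ) then 2 - X else 1 - X

lemma succAbove_one_val {n : ℕ} (j : Fin (n+1)) :
    (((1 : Fin (n+2)).succAbove j) : ℕ) = if (j:ℕ) = 0 then 0 else (j:ℕ)+1 := by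
  rcases Nat.eq_zero_or_pos (j:ℕ) with h | h
  · rw [if_pos h, Fin.succAbove, if_pos (by rw [Fin.lt_def]; simp [h])]
    simp [h]
  · rw [if_neg (by omega), Fin.succAbove,
      if_neg (by rw [Fin.lt_def]; simp only [Fin.coe_castSucc, Fin.val_one]; omega)]
    simp

lemma Nm_sub : ∀ n, (Nm (n+2)).submatrix Fin.succ ((1 : Fin (n+2)).succAbove) = Nm (n+1) := by
  intro n
  ext i j
  simp only [submatrix_apply, Nm, of_apply, Fin.val_succ, succAbove_one_val]
  rcases Nat.eq_zero_or_pos (j:ℕ) with h | h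
  · simp [h]
  · have hj : ¬ ((j:ℕ) = 0) := by omega
    simp only [hj, if_false, if_neg (by omega : ¬ ((j:ℕ)+1 = 0))]
    rcases lt_trichotomy (i:ℕ) (j:ℕ) with h1 | h1 | h1 <;>
      simp [h1] <;> omega

lemma Mm_sub0 : ∀ n, (Mm (n+2)).submatrix Fin.succ ((0 : Fin (n+2)).succAbove) = Mm (n+1) := by
  intro n
  ext i j
  simp only [submatrix_apply, Mm, of_apply, Fin.succAbove_zero, Fin.val_succ]
  rcases lt_trichotomy (i:ℕ) (j:ℕ) with h1 | h1 | h1 <;> simp [h1] <;> omega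

lemma Mm_sub1 : ∀ n, (Mm (n+2)).submatrix Fin.succ ((1 : Fin (n+2)).succAbove) = Nm (n+1) := by
  intro n
  ext i j
  simp only [submatrix_apply, Mm, Nm, of_apply, Fin.val_succ, succAbove_one_val]
  rcases Nat.eq_zero_or_pos (j:ℕ) with h | h
  · simp [h]
  · have hj : ¬ ((j:ℕ) = 0) := by omega
    simp only [hj, if_false]
    rcases lt_trichotomy (i:ℕ) (j:ℕ) with h1 | h1 | h1 <;> simp [h1] <;> omega

lemma detN : ∀ n, (Nm (n+1)).det = (1-X) * X^n := by
  intro n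
  induction n with
  | zero => simp [Nm, det_fin_one]
  | succ n ih =>
    set R := (Nm (n+2)).updateRow 0 ((Nm (n+2)) 0 + (-1 : Polynomial ℤ) • (Nm (n+2)) 1) with hR
    have hdet : (Nm (n+2)).det = R.det :=
      (det_updateRow_add_smul_self _ (by simp : (0 : Fin (n+2)) ≠ 1) _).symm
    have hrow : ∀ j : Fin (n+2), R 0 j =
        if (j:ℕ) = 1 then -X else 0 := by
      intro j
      rw [hR, updateRow_self]
      simp only [Pi.add_apply, Pi.smul_apply, Nm, of_apply, smul_eq_mul]
      have h0 : ((0 : Fin (n+2)):ℕ) = 0 := rfl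
      have h1 : ((1 : Fin (n+2)):ℕ) = 1 := rfl
      rcases Nat.lt_or_ge (j:ℕ) 2 with h | h
      · interval_cases h : (j:ℕ) <;> simp_all <;> ring
      · have : ¬ ((j:ℕ) = 0) := by omega
        have h2 : (0:ℕ) < (j:ℕ) := by omega
        have h3 : (1:ℕ) < (j:ℕ) := by omega
        simp_all
        omega
    have hsub : ∀ σ : Fin (n+1) → Fin (n+2),
        R.submatrix Fin.succ σ = (Nm (n+2)).submatrix Fin.succ σ := by
      intro σ; ext i j
      simp [hR, updateRow_ne (Fin.succ_ne_zero i)]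
    rw [hdet, det_succ_row_zero]
    rw [Fin.sum_univ_succ, Fin.sum_univ_succ]
    have e0 : R 0 0 = 0 := by rw [hrow]; norm_num
    have e1 : R 0 (Fin.succ 0) = -X := by
      rw [hrow]; norm_num
    rw [e0, e1]
    have erest : ∀ j : Fin n, R 0 (Fin.succ (Fin.succ j)) = 0 := by
      intro j; rw [hrow]
      have : ((Fin.succ (Fin.succ j)) : ℕ) = (j:ℕ) + 2 := by simp
      rw [if_neg (by omega)]
    simp only [erest, mul_zero, zero_mul, Finset.sum_const_zero]
    have : (Fin.succ (0 : Fin (n+1))) = (1 : Fin (n+2)) := rfl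
    rw [this, hsub, Nm_sub, ih]
    simp only [Fin.val_zero, Fin.val_one, pow_zero, pow_one]
    push_cast
    ring

lemma detM : ∀ n, (Mm (n+1)).det = 2 - X^(n+1) := by
  intro n
  induction n with
  | zero => simp [Mm, det_fin_one]
  | succ n ih =>
    set R := (Mm (n+2)).updateRow 0 ((Mm (n+2)) 0 + (-1 : Polynomial ℤ) • (Mm (n+2)) 1) with hR
    have hdet : (Mm (n+2)).det = R.det :=
      (det_updateRow_add_smul_self _ (by simp : (0 : Fin (n+2)) ≠ 1) _).symm
    have hrow : ∀ j : Fin (n+2), R 0 j =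
        if (j:ℕ) = 0 then 1 else if (j:ℕ) = 1 then -X else 0 := by
      intro j
      rw [hR, updateRow_self]
      simp only [Pi.add_apply, Pi.smul_apply, Mm, of_apply, smul_eq_mul]
      have h0 : ((0 : Fin (n+2)):ℕ) = 0 := rfl
      have h1 : ((1 : Fin (n+2)):ℕ) = 1 := rfl
      rcases Nat.lt_or_ge (j:ℕ) 2 with h | h
      · interval_cases h : (j:ℕ) <;> simp_all <;> ring
      · have : ¬ ((j:ℕ) = 0) := by omega
        have h2 : (0:ℕ) < (j:ℕ) := by omega
        have h3 : (1:ℕ) < (j:ℕ) := by omega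
        simp_all
        omega
    have hsub : ∀ σ : Fin (n+1) → Fin (n+2),
        R.submatrix Fin.succ σ = (Mm (n+2)).submatrix Fin.succ σ := by
      intro σ; ext i j
      simp [hR, updateRow_ne (Fin.succ_ne_zero i)]
    rw [hdet, det_succ_row_zero]
    rw [Fin.sum_univ_succ, Fin.sum_univ_succ]
    have e0 : R 0 0 = 1 := by rw [hrow]; norm_num
    have e1 : R 0 (Fin.succ 0) = -X := by rw [hrow]; norm_num
    rw [e0, e1]
    have erest : ∀ j : Fin n, R 0 (Fin.succ (Fin.succ j)) = 0 := by
      intro j; rw [hrow]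
      have : ((Fin.succ (Fin.succ j)) : ℕ) = (j:ℕ) + 2 := by simp
      rw [if_neg (by omega), if_neg (by omega)]
    simp only [erest, mul_zero, zero_mul, Finset.sum_const_zero]
    have h1 : (Fin.succ (0 : Fin (n+1))) = (1 : Fin (n+2)) := rfl
    rw [h1, hsub, hsub, Mm_sub0, Mm_sub1, ih, detN]
    simp only [Fin.val_zero, Fin.val_one, pow_zero, pow_one]
    push_cast
    ring

/-- `det (Aₙ − t·Bₙᵀ) = 2 − tⁿ` for the Seifert-matrix blocks of `K_{n,m}`. -/
theorem det_A_sub_tBt (n : ℕ) (hn : 1 ≤ n)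
    (A B : Matrix (Fin n) (Fin n) (Polynomial ℤ))
    (hA : ∀ i j, A i j = if i ≤ j then 2 else 1)
    (hB : ∀ i j, B i j = if i ≤ j then 1 else 2) :
    (A - (X : Polynomial ℤ) • B.transpose).det = 2 - X ^ n := by
  obtain ⟨m, rfl⟩ : ∃ m, n = m + 1 := ⟨n - 1, by omega⟩
  have hM : A - (X : Polynomial ℤ) • B.transpose = Mm (m+1) := by
    ext i j : 1
    simp only [Matrix.sub_apply, Matrix.smul_apply, transpose_apply, hA, hB, Mm, of_apply, smul_eq_mul]
    rcases lt_trichotomy (i:ℕ) (j:ℕ) with h | h | h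
    · rw [if_pos (by exact Fin.le_def.mpr (by omega)), if_neg (by
        rw [Fin.le_def]; omega), if_pos h]
      ring
    · rw [if_pos (Fin.le_def.mpr (by omega)), if_pos (Fin.le_def.mpr (by omega)),
        if_neg (by omega), if_pos h]
      ring
    · rw [if_neg (by rw [Fin.le_def]; omega), if_pos (Fin.le_def.mpr (by omega)),
        if_neg (by omega), if_neg (by omega)]
      ring
  rw [hM, detM]
end

section
/- Let n ≥ 1 and let t denote the variable X of the polynomial ring ℤ[t]. Let M be the n×n matrix over ℤ[t] whose (i,j) entry equals 2t − 2 if i = 1 or j > i, equals 2t − 1 if i = j with i ≥ 2, and equals t − 1 if j < i with i ≥ 2. Then det M = 2·t^{n−1}·(t − 1). -/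
open Polynomial

/-- The auxiliary determinant `βₙ = 2t^{n−1}(t−1)`.
The rows of the `n × n` matrix are indexed by `Fin n`, so the paper's first
row `i = 1` corresponds to `i = 0`. -/
theorem det_beta (n : ℕ) (hn : 1 ≤ n)
    (M : Matrix (Fin n) (Fin n) (Polynomial ℤ))
    (hM : ∀ i j, M i j =
      if (i : ℕ) = 0 ∨ i < j then 2 * X - 2
      else if i = j then 2 * X - 1
      else X - 1) :
    M.det = 2 * X ^ (n - 1) * (X - 1) := by
  rcases n with _ | _ | m
  · omega
  · rw [Matrix.det_fin_one, hM 0 0,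
      if_pos (show (((0:Fin 1)):ℕ) = 0 ∨ (0:Fin 1) < 0 from Or.inl rfl)]
    show (2*X-2 : Polynomial ℤ) = 2 * X ^ 0 * (X - 1)
    ring
  · -- n = m + 2
    -- the column-operation matrix
    set V : Matrix (Fin (m+2)) (Fin (m+2)) (Polynomial ℤ) :=
      fun k j => (if k = j then 1 else 0) + (if (k:ℕ) = (j:ℕ)+1 then -1 else 0) with hV
    -- the result of the column operations
    set C : Matrix (Fin (m+2)) (Fin (m+2)) (Polynomial ℤ) :=
      fun i j =>
        if (j:ℕ) = m+1 then (if (i:ℕ) = m+1 then 2*X-1 else 2*X-2)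
        else if (i:ℕ) = (j:ℕ)+1 then -X
        else if (i:ℕ) = (j:ℕ) ∧ (j:ℕ) ≠ 0 then 1 else 0 with hC
    have key : M * V = C := by
      rw [← Matrix.ext_iff]
      intro i j
      rw [Matrix.mul_apply]
      simp only [hV, mul_add, mul_ite, mul_one, mul_neg, mul_zero, Finset.sum_add_distrib]
      rw [Finset.sum_ite_eq' Finset.univ j (fun k => M i k)]
      by_cases hj : (j:ℕ) = m + 1
      · have hz : ∀ k : Fin (m+2), (if (k:ℕ) = (j:ℕ)+1 then -(M i k) else 0) = 0 := by
          intro k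
          rw [if_neg]
          omega
        rw [Finset.sum_congr rfl (fun k _ => hz k)]
        simp only [Finset.sum_const_zero, Finset.mem_univ, if_true, add_zero, hC]
        rw [hM i j, if_pos hj]
        have hij : i < j ↔ (i:ℕ) < (j:ℕ) := Iff.rfl
        by_cases hi : (i:ℕ) = m + 1
        · rw [if_pos hi, if_neg, if_pos]
          · exact Fin.ext (by omega)
          · rw [Fin.lt_def]; omega
        · rw [if_neg hi, if_pos]
          rw [Fin.lt_def]
          omega
      · have hj1 : (j:ℕ) + 1 < m + 2 := by omega
        set j1 : Fin (m+2) := ⟨(j:ℕ)+1, hj1⟩ with hj1def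
        have hcond : ∀ k : Fin (m+2), ((k:ℕ) = (j:ℕ)+1) = (k = j1) := by
          intro k
          simp [Fin.ext_iff, hj1def]
        simp only [hcond]
        rw [Finset.sum_ite_eq' Finset.univ j1 (fun k => -(M i k))]
        simp only [Finset.mem_univ, if_true, hC]
        rw [hM i j, hM i j1]
        have hjv : (j1:ℕ) = (j:ℕ) + 1 := rfl
        simp only [Fin.lt_def, Fin.ext_iff, hjv, if_neg hj]
        split_ifs <;> first | ring1 | omega
    have hdetV : V.det = 1 := by
      rw [Matrix.det_of_lowerTriangular V]
      · simp [hV]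
      · intro i j hij
        have : (i:ℕ) < (j:ℕ) := hij
        simp only [hV]
        rw [if_neg, if_neg]
        · ring
        · omega
        · exact fun h => by omega
    have hdetC : C.det = 2 * X ^ (m+1) * (X - 1) := by
      have hperm := Matrix.det_permute (finRotate (m+2)) C
      have hupper : ((C.submatrix (finRotate (m+2)) id)).det = (-X)^(m+1) * (2*X-2) := by
        rw [Matrix.det_of_upperTriangular]
        · rw [Fin.prod_univ_castSucc]
          have h1 : ∀ i : Fin (m+1),
              (C.submatrix (finRotate (m+2)) id) i.castSucc i.castSucc = -X := by
            intro i
            have hlt : i.castSucc ≠ Fin.last (m+1) := by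
              simp [Fin.ext_iff]
              omega
            have hval : ((finRotate (m+2)) i.castSucc : ℕ) = (i:ℕ) + 1 := by
              rw [finRotate_succ_apply, Fin.val_add_one_of_lt]
              · rfl
              · exact Fin.lt_last_iff_ne_last.mpr hlt
            simp only [Matrix.submatrix_apply, id]
            simp only [hC]
            rw [if_neg, if_pos]
            · exact hval
            · simp [Fin.castSucc]
              omega
          rw [Finset.prod_congr rfl (fun i _ => h1 i)]
          have h2 : (C.submatrix (finRotate (m+2)) id) (Fin.last (m+1)) (Fin.last (m+1))
              = 2*X - 2 := by
            have hval : ((finRotate (m+2)) (Fin.last (m+1)) : ℕ) = 0 := by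
              rw [finRotate_succ_apply, Fin.last_add_one]
              rfl
            simp only [Matrix.submatrix_apply, id]
            simp only [hC]
            rw [if_pos, if_neg]
            · omega
            · simp [Fin.last]
          rw [h2]
          simp [mul_comm]
        · intro i j hij
          have hlt : (j:ℕ) < (i:ℕ) := hij
          simp only [Matrix.submatrix_apply, id]
          simp only [hC]
          by_cases hi : (i:ℕ) = m + 1
          · have hval : ((finRotate (m+2)) i : ℕ) = 0 := by
              have : i = Fin.last (m+1) := Fin.ext (by simpa using hi)
              rw [finRotate_succ_apply, this, Fin.last_add_one]
              rfl
            rw [if_neg, if_neg, if_neg]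
            · omega
            · omega
            · omega
          · have hval : ((finRotate (m+2)) i : ℕ) = (i:ℕ) + 1 := by
              rw [finRotate_succ_apply, Fin.val_add_one_of_lt]
              rw [Fin.lt_iff_val_lt_val]
              simp [Fin.last]
              omega
            rw [if_neg, if_neg, if_neg]
            · omega
            · omega
            · omega
      rw [hupper, sign_finRotate] at hperm
      have hsign : ((Equiv.Perm.sign (finRotate (m+2)) : ℤˣ) : Polynomial ℤ)
          = (-1 : Polynomial ℤ)^(m+1) := by
        rw [sign_finRotate]
        push_cast
        ring
      -- hperm : (-X)^(m+1) * (2*X-2) = ↑((-1)^(m+1)) * C.det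
      have : ((-1 : Polynomial ℤ))^(m+1) * ((-X)^(m+1) * (2*X-2))
          = C.det := by
        rw [hperm]
        rw [← mul_assoc]
        have : ((-1 : Polynomial ℤ))^(m+1) * (((-1:ℤˣ)^(m+1) : ℤˣ) : Polynomial ℤ) = 1 := by
          push_cast
          rw [← mul_pow]
          norm_num
        rw [show m + 2 - 1 = m + 1 by omega, this, one_mul]
      rw [← this]
      rw [← mul_assoc, ← mul_pow]
      ring_nf
    calc M.det = M.det * V.det := by rw [hdetV, mul_one]
    _ = (M * V).det := (Matrix.det_mul M V).symm
    _ = C.det := by rw [key]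
    _ = 2 * X ^ (m + 2 - 1) * (X - 1) := by rw [hdetC]; norm_num
end

section
/- Let n ≥ 1 and let t denote the variable X of the polynomial ring ℤ[t]. Let A_n and B_n be the n×n matrices over ℤ[t] with entries (A_n)_{ij} = 2 if i ≤ j and 1 if i > j, and (B_n)_{ij} = 1 if i ≤ j and 2 if i > j, and let S_n be the 2n×2n block matrix [[0, A_n],[B_n, 0]]. Then det(t·S_n − S_nᵀ) = (2tⁿ − 1)·(2 − tⁿ) = −(2t^{2n} − 5tⁿ + 2) in ℤ[t]. -/
open Polynomial Finset

namespace DetSeifertAux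

variable {R : Type*} [CommRing R]

/-- Lower unitriangular row-operation matrix: `L i j = t^(i-j)` for `j ≤ i`. -/
def Lmat (R : Type*) [CommRing R] (m : ℕ) (t : R) : Matrix (Fin (m + 1)) (Fin (m + 1)) R :=
  Matrix.of fun i j => if (j : ℕ) ≤ (i : ℕ) then t ^ ((i : ℕ) - (j : ℕ)) else 0

/-- Lower unitriangular column-operation matrix (subtract next column). -/
def Vmat (R : Type*) [CommRing R] (m : ℕ) : Matrix (Fin (m + 1)) (Fin (m + 1)) R :=
  Matrix.of fun i j =>
    if (i : ℕ) = (j : ℕ) then 1 else if (i : ℕ) = (j : ℕ) + 1 then -1 else 0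

lemma det_Lmat (m : ℕ) (t : R) : (Lmat R m t).det = 1 := by
  rw [Matrix.det_of_lowerTriangular]
  · simp [Lmat]
  · intro i j hij
    have h : i < j := hij
    have h' : (i : ℕ) < (j : ℕ) := Fin.lt_def.mp h
    simp only [Lmat, Matrix.of_apply]
    rw [if_neg (by omega)]

lemma det_Vmat (m : ℕ) : (Vmat R m).det = 1 := by
  rw [Matrix.det_of_lowerTriangular]
  · simp [Vmat]
  · intro i j hij
    have h : i < j := hij
    have h' : (i : ℕ) < (j : ℕ) := Fin.lt_def.mp h
    simp only [Vmat, Matrix.of_apply]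
    rw [if_neg (by omega), if_neg (by omega)]

lemma sum_fin_ite {m : ℕ} (c : ℕ) (hc : c < m + 1) (f : Fin (m + 1) → R) (v : R) :
    (∑ k : Fin (m + 1), f k * (if (k : ℕ) = c then v else 0)) = f ⟨c, hc⟩ * v := by
  rw [Finset.sum_eq_single (⟨c, hc⟩ : Fin (m + 1))]
  · simp
  · intro k _ hk
    rw [if_neg (fun h => hk (Fin.ext h)), mul_zero]
  · intro h; exact absurd (Finset.mem_univ _) h

lemma key (m : ℕ) (t a d b e : R) (he : d - a = e) (hf : b - d = -(t * e))
    (P : Matrix (Fin (m + 1)) (Fin (m + 1)) R)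
    (hP : ∀ i j : Fin (m + 1), P i j =
      if (i : ℕ) < (j : ℕ) then a else if (i : ℕ) = (j : ℕ) then d else b) :
    P.det = e ^ m * (a * (∑ k ∈ Finset.range m, t ^ (k + 1)) + d) := by
  classical
  -- entries of `P * V`
  have hPV : ∀ k j : Fin (m + 1), (P * Vmat R m) k j =
      if (j : ℕ) = m then (if (k : ℕ) = m then d else a)
      else if (k : ℕ) = (j : ℕ) then e
      else if (k : ℕ) = (j : ℕ) + 1 then -(t * e) else 0 := by
    intro k j
    rw [Matrix.mul_apply]
    have hsplit : ∀ k' : Fin (m + 1), Vmat R m k' j =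
        (if (k' : ℕ) = (j : ℕ) then (1 : R) else 0) +
        (if (k' : ℕ) = (j : ℕ) + 1 then -1 else 0) := by
      intro k'
      simp only [Vmat, Matrix.of_apply]
      by_cases h1 : (k' : ℕ) = (j : ℕ)
      · rw [if_pos h1, if_pos h1, if_neg (by omega), add_zero]
      · rw [if_neg h1, if_neg h1, zero_add]
    simp only [hsplit, mul_add, Finset.sum_add_distrib]
    have h1 : (∑ k' : Fin (m + 1), P k k' * (if (k' : ℕ) = (j : ℕ) then (1 : R) else 0))
        = P k j := by
      rw [sum_fin_ite (j : ℕ) j.isLt, mul_one]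
    rw [h1]
    have hk := k.isLt
    have hj := j.isLt
    by_cases hjm : (j : ℕ) = m
    · rw [if_pos hjm]
      have h2 : (∑ k' : Fin (m + 1), P k k' * (if (k' : ℕ) = (j : ℕ) + 1 then (-1 : R) else 0))
          = 0 := by
        apply Finset.sum_eq_zero
        intro k' _
        have := k'.isLt
        rw [if_neg (by omega), mul_zero]
      rw [h2, add_zero, hP]
      split_ifs <;> first | rfl | (exfalso; omega)
    · have h2 : (∑ k' : Fin (m + 1), P k k' * (if (k' : ℕ) = (j : ℕ) + 1 then (-1 : R) else 0))
          = P k ⟨(j : ℕ) + 1, by omega⟩ * (-1) := sum_fin_ite _ (by omega) _ _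
      rw [h2, if_neg hjm, hP, hP]
      simp only [Fin.val_mk]
      split_ifs <;>
        first
          | ring1
          | linear_combination he
          | linear_combination hf
          | (exfalso; omega)
  -- entries of `L * (P * V)` in columns `j < m`
  have hQ1 : ∀ i j : Fin (m + 1), (j : ℕ) < m → (Lmat R m t * (P * Vmat R m)) i j =
      (if (j : ℕ) ≤ (i : ℕ) then t ^ ((i : ℕ) - (j : ℕ)) else 0) * e +
      (if (j : ℕ) + 1 ≤ (i : ℕ) then t ^ ((i : ℕ) - ((j : ℕ) + 1)) else 0) * (-(t * e)) := by
    intro i j hj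
    rw [Matrix.mul_apply]
    have hval : ∀ k : Fin (m + 1), (P * Vmat R m) k j =
        (if (k : ℕ) = (j : ℕ) then e else 0) +
        (if (k : ℕ) = (j : ℕ) + 1 then -(t * e) else 0) := by
      intro k
      rw [hPV, if_neg (by omega)]
      by_cases h1 : (k : ℕ) = (j : ℕ)
      · rw [if_pos h1, if_pos h1, if_neg (by omega), add_zero]
      · rw [if_neg h1, if_neg h1, zero_add]
    simp only [hval, mul_add]
    rw [Finset.sum_add_distrib,
      sum_fin_ite (j : ℕ) (by omega) _ e,
      sum_fin_ite ((j : ℕ) + 1) (by omega) _ (-(t * e))]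
    simp only [Lmat, Matrix.of_apply]
  have hlow : ∀ i j : Fin (m + 1), (j : ℕ) < (i : ℕ) → (Lmat R m t * (P * Vmat R m)) i j = 0 := by
    intro i j hij
    have hi := i.isLt
    rw [hQ1 i j (by omega), if_pos (by omega), if_pos (by omega)]
    have hexp : (i : ℕ) - (j : ℕ) = ((i : ℕ) - ((j : ℕ) + 1)) + 1 := by omega
    rw [hexp, pow_succ]
    ring
  have hdiag : ∀ i : Fin (m + 1), (i : ℕ) < m → (Lmat R m t * (P * Vmat R m)) i i = e := by
    intro i hi
    rw [hQ1 i i hi, if_pos le_rfl, if_neg (by omega), Nat.sub_self, pow_zero, one_mul,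
      zero_mul, add_zero]
  have hlast : (Lmat R m t * (P * Vmat R m)) (Fin.last m) (Fin.last m) =
      a * (∑ k ∈ Finset.range m, t ^ (k + 1)) + d := by
    rw [Matrix.mul_apply]
    have hval : ∀ k : Fin (m + 1), (P * Vmat R m) k (Fin.last m) =
        if (k : ℕ) = m then d else a := by
      intro k
      rw [hPV, if_pos (by simp)]
    have hL : ∀ k : Fin (m + 1), Lmat R m t (Fin.last m) k = t ^ (m - (k : ℕ)) := by
      intro k
      have := k.isLt
      simp only [Lmat, Matrix.of_apply, Fin.val_last]
      rw [if_pos (by omega)]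
    simp only [hval, hL]
    rw [Fin.sum_univ_castSucc]
    simp only [Fin.coe_castSucc, Fin.val_last, Nat.sub_self, pow_zero, if_pos rfl, one_mul]
    have hmain : (∑ k : Fin m, t ^ (m - (k : ℕ)) * (if (k : ℕ) = m then d else a))
        = a * (∑ k ∈ Finset.range m, t ^ (k + 1)) := by
      have h1 : (∑ k : Fin m, t ^ (m - (k : ℕ)) * (if (k : ℕ) = m then d else a))
          = ∑ k : Fin m, t ^ (m - (k : ℕ)) * a := by
        apply Finset.sum_congr rfl
        intro k _
        have := k.isLt
        rw [if_neg (by omega)]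
      rw [h1, Fin.sum_univ_eq_sum_range (fun k => t ^ (m - k) * a) m]
      have h2 : (∑ k ∈ Finset.range m, t ^ (m - k) * a)
          = ∑ k ∈ Finset.range m, t ^ ((m - 1 - k) + 1) * a := by
        apply Finset.sum_congr rfl
        intro k hk
        have := Finset.mem_range.mp hk
        congr 2
        omega
      rw [h2, Finset.sum_range_reflect (fun k => t ^ (k + 1) * a) m, ← Finset.sum_mul]
      ring
    rw [hmain]
    simp
  -- assemble
  have hdet1 : (Lmat R m t * (P * Vmat R m)).det = P.det := by
    rw [Matrix.det_mul, Matrix.det_mul, det_Lmat, det_Vmat, one_mul, mul_one]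
  rw [← hdet1]
  rw [Matrix.det_of_upperTriangular (by
    intro i j hij
    exact hlow i j (Fin.lt_def.mp hij))]
  rw [Fin.prod_univ_castSucc, hlast]
  congr 1
  have : ∀ i : Fin m, (Lmat R m t * (P * Vmat R m)) i.castSucc i.castSucc = e := by
    intro i
    exact hdiag _ (by simpa using i.isLt)
  rw [Finset.prod_congr rfl (fun i _ => this i)]
  simp

lemma sign_sumComm (n : ℕ) :
    Equiv.Perm.sign (Equiv.sumComm (Fin n) (Fin n) : Equiv.Perm (Fin n ⊕ Fin n)) = (-1) ^ n := by
  rw [Equiv.Perm.sign_eq_sign_of_equiv _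
      (Equiv.prodCongrLeft fun _ : Fin n => Equiv.swap false true)
      (Equiv.boolProdEquivSum (Fin n)).symm (by
        rintro (i | i) <;>
          simp [Equiv.prodCongrLeft_apply, Equiv.swap_apply_left, Equiv.swap_apply_right])]
  rw [Equiv.Perm.sign_prodCongrLeft]
  simp [Equiv.Perm.sign_swap]

end DetSeifertAux

open DetSeifertAux in
/-- `det (t·Sₙ − Sₙᵀ) = (2tⁿ − 1)(2 − tⁿ) = −(2t^{2n} − 5tⁿ + 2)` for the
Seifert matrix `Sₙ = [[0, Aₙ],[Bₙ, 0]]` of `K_{n,m}`. -/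
theorem det_Seifert (n : ℕ) (hn : 1 ≤ n)
    (A B : Matrix (Fin n) (Fin n) (Polynomial ℤ))
    (hA : ∀ i j, A i j = if i ≤ j then 2 else 1)
    (hB : ∀ i j, B i j = if i ≤ j then 1 else 2)
    (S : Matrix (Fin n ⊕ Fin n) (Fin n ⊕ Fin n) (Polynomial ℤ))
    (hS : S = Matrix.fromBlocks 0 A B 0) :
    ((X : Polynomial ℤ) • S - S.transpose).det = (2 * X ^ n - 1) * (2 - X ^ n) ∧
    (2 * (X : Polynomial ℤ) ^ n - 1) * (2 - X ^ n) = -(2 * X ^ (2 * n) - 5 * X ^ n + 2) := by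
  constructor
  · obtain ⟨m, rfl⟩ : ∃ m, n = m + 1 := ⟨n - 1, by omega⟩
    subst hS
    set M' : Matrix (Fin (m + 1)) (Fin (m + 1)) (Polynomial ℤ) :=
      Matrix.of fun i j => X * A i j - B j i with hM'def
    set N' : Matrix (Fin (m + 1)) (Fin (m + 1)) (Polynomial ℤ) :=
      Matrix.of fun i j => X * B i j - A j i with hN'def
    have hsplit : (X : Polynomial ℤ) • Matrix.fromBlocks 0 A B 0 -
        (Matrix.fromBlocks 0 A B 0).transpose = Matrix.fromBlocks 0 M' N' 0 := by
      ext i j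
      rcases i with i | i <;> rcases j with j | j <;>
        simp [hM'def, hN'def, smul_eq_mul]
    have hfactor : (Matrix.fromBlocks 0 M' N' (0 : Matrix (Fin (m + 1)) (Fin (m + 1))
        (Polynomial ℤ))) = Matrix.fromBlocks M' 0 0 N' * Matrix.fromBlocks 0 1 1 0 := by
      rw [Matrix.fromBlocks_multiply]
      simp
    have hperm : (Matrix.fromBlocks 0 1 1 (0 : Matrix (Fin (m + 1)) (Fin (m + 1))
        (Polynomial ℤ))) = (1 : Matrix (Fin (m + 1) ⊕ Fin (m + 1)) (Fin (m + 1) ⊕ Fin (m + 1))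
        (Polynomial ℤ)).submatrix (Equiv.sumComm (Fin (m + 1)) (Fin (m + 1))) id := by
      ext i j
      rcases i with i | i <;> rcases j with j | j <;>
        simp [Matrix.one_apply, Matrix.submatrix_apply]
    have hgeom : ((X : Polynomial ℤ) - 1) * (∑ k ∈ Finset.range m, X ^ (k + 1))
        = X ^ (m + 1) - X := by
      have hsum : (∑ k ∈ Finset.range m, (X : Polynomial ℤ) ^ (k + 1))
          = (∑ k ∈ Finset.range m, X ^ k) * X := by
        rw [Finset.sum_mul]
        exact Finset.sum_congr rfl fun k _ => (pow_succ X k)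
      rw [hsum]
      have h := geom_sum_mul (X : Polynomial ℤ) m
      linear_combination X * h
    have hdM : M'.det = 2 * X ^ (m + 1) - 1 := by
      rw [key m X (2 * X - 2) (2 * X - 1) (X - 1) 1 (by ring) (by ring) M' (by
        intro i j
        simp only [hM'def, Matrix.of_apply, hA, hB]
        rcases lt_trichotomy (i : ℕ) (j : ℕ) with h | h | h
        · rw [if_pos (Fin.le_def.mpr h.le), if_neg (by rw [Fin.le_def]; omega), if_pos h]
          ring
        · rw [if_pos (Fin.le_def.mpr h.le), if_pos (Fin.le_def.mpr h.ge),
            if_neg (by omega), if_pos h]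
          ring
        · rw [if_neg (by rw [Fin.le_def]; omega), if_pos (Fin.le_def.mpr h.le),
            if_neg (by omega), if_neg (by omega)]
          ring)]
      rw [one_pow, one_mul]
      linear_combination 2 * hgeom
    have hdN : N'.det = (-1) ^ m * (X ^ (m + 1) - 2) := by
      rw [key m X (X - 1) (X - 2) (2 * X - 2) (-1) (by ring) (by ring) N' (by
        intro i j
        simp only [hN'def, Matrix.of_apply, hA, hB]
        rcases lt_trichotomy (i : ℕ) (j : ℕ) with h | h | h
        · rw [if_pos (Fin.le_def.mpr h.le), if_neg (by rw [Fin.le_def]; omega), if_pos h]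
          ring
        · rw [if_pos (Fin.le_def.mpr h.le), if_pos (Fin.le_def.mpr h.ge),
            if_neg (by omega), if_pos h]
          ring
        · rw [if_neg (by rw [Fin.le_def]; omega), if_pos (Fin.le_def.mpr h.le),
            if_neg (by omega), if_neg (by omega)]
          ring)]
      congr 1
      linear_combination hgeom
    rw [hsplit, hfactor, Matrix.det_mul, Matrix.det_fromBlocks_zero₂₁, hperm,
      Matrix.det_permute, Matrix.det_one, mul_one, sign_sumComm, hdM, hdN]
    push_cast
    have hu : ((-1 : Polynomial ℤ)) ^ m * (-1) ^ (m + 1) = -1 := by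
      rw [← pow_add, show m + (m + 1) = 2 * m + 1 from by ring, pow_succ, pow_mul,
        neg_one_sq, one_pow, one_mul]
    linear_combination (2 * (X : Polynomial ℤ) ^ (m + 1) - 1) * (X ^ (m + 1) - 2) * hu
  · ring
end

section
/- Let n ≥ 1 and let t denote the variable X of the polynomial ring ℤ[t]. Let A'_n and B'_n be the n×n matrices over ℤ[t] with entries (A'_n)_{ij} = −2 if i ≤ j and −3 if i > j, and (B'_n)_{ij} = −3 if i ≤ j and −2 if i > j. Then det(t·A'_n − B'_nᵀ) = 3 − 2tⁿ in ℤ[t]. -/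
open Polynomial Matrix Finset

noncomputable abbrev RR := Polynomial ℤ

/-- The matrix `t·A'ₙ − B'ₙᵀ`. -/
noncomputable def Mmat (n : ℕ) : Matrix (Fin n) (Fin n) RR := fun i j =>
  X * (if i ≤ j then (-2 : RR) else -3) - (if j ≤ i then (-3 : RR) else -2)

/-- Result of row-reducing `Mmat`: `row i := row i - row (i+1)` for `i < n-1`. -/
noncomputable def Nmat (n : ℕ) : Matrix (Fin n) (Fin n) RR := fun i j =>
  if (i : ℕ) + 1 = n then (if (j : ℕ) + 1 = n then 3 - 2*X else 3 - 3*X)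
  else if j = i then X else if (j : ℕ) = (i : ℕ) + 1 then -1 else 0

/-- The elementary row-operation matrix. -/
noncomputable def Emat (n : ℕ) : Matrix (Fin n) (Fin n) RR := fun i j =>
  if j = i then 1 else if (j : ℕ) = (i : ℕ) + 1 then -1 else 0

lemma Emat_det (n : ℕ) : (Emat n).det = 1 := by
  rw [Matrix.det_of_upperTriangular]
  · simp [Emat]
  · intro i j hij
    have hij' : (j : ℕ) < (i : ℕ) := Fin.lt_def.mp hij
    simp only [Emat, id] at *
    rw [if_neg (Fin.ne_of_lt hij), if_neg (by omega)]

lemma Emat_mul (n : ℕ) : Emat n * Mmat n = Nmat n := by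
  ext i j
  rw [Matrix.mul_apply]
  have hterm : ∀ k : Fin n, Emat n i k * Mmat n k j =
      (if k = i then Mmat n k j else 0) +
      (if (k : ℕ) = (i : ℕ) + 1 then -(Mmat n k j) else 0) := by
    intro k
    simp only [Emat]
    split_ifs with h1 h2 h2 <;> first | (exfalso; omega) | ring
  rw [Finset.sum_congr rfl (fun k _ => hterm k), Finset.sum_add_distrib,
    Finset.sum_ite_eq' _ i, if_pos (Finset.mem_univ i)]
  by_cases hi : (i : ℕ) + 1 < n
  · have h2 : ∀ k : Fin n, (if (k : ℕ) = (i : ℕ) + 1 then -(Mmat n k j) else 0) =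
        (if k = (⟨(i : ℕ) + 1, hi⟩ : Fin n) then -(Mmat n k j) else 0) := by
      intro k; congr 1
      simp [Fin.ext_iff]
    rw [Finset.sum_congr rfl (fun k _ => h2 k), Finset.sum_ite_eq' _ _,
      if_pos (Finset.mem_univ _)]
    have hne : ¬ ((i : ℕ) + 1 = n) := by omega
    simp only [Mmat, Nmat, if_neg hne]
    by_cases hji : j = i
    · subst hji
      rw [if_pos rfl, if_pos le_rfl, if_pos le_rfl,
        if_neg (by simp only [Fin.le_def]; omega),
        if_pos (by simp only [Fin.le_def]; omega)]
      ring
    · rw [if_neg hji]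
      by_cases hj1 : (j : ℕ) = (i : ℕ) + 1
      · rw [if_pos hj1, if_pos (by simp only [Fin.le_def]; omega),
          if_neg (by simp only [Fin.le_def]; omega),
          if_pos (by simp only [Fin.le_def]; omega),
          if_pos (by simp only [Fin.le_def]; omega)]
        ring
      · rw [if_neg hj1]
        have hij' : (i : ℕ) ≠ (j : ℕ) := fun h => hji (Fin.ext h.symm)
        rcases lt_or_gt_of_ne hij' with h | h
        · rw [if_pos (by simp only [Fin.le_def]; omega),
            if_neg (by simp only [Fin.le_def]; omega),
            if_pos (by simp only [Fin.le_def]; omega),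
            if_neg (by simp only [Fin.le_def]; omega)]
          ring
        · rw [if_neg (by simp only [Fin.le_def]; omega),
            if_pos (by simp only [Fin.le_def]; omega),
            if_neg (by simp only [Fin.le_def]; omega),
            if_pos (by simp only [Fin.le_def]; omega)]
          ring
  · have h2 : ∀ k : Fin n, (if (k : ℕ) = (i : ℕ) + 1 then -(Mmat n k j) else 0) = 0 := by
      intro k
      have := k.isLt
      rw [if_neg (by omega)]
    rw [Finset.sum_congr rfl (fun k _ => h2 k), Finset.sum_const_zero, add_zero]
    have hlast : (i : ℕ) + 1 = n := by have := i.isLt; omega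
    simp only [Mmat, Nmat, if_pos hlast]
    by_cases hj : (j : ℕ) + 1 = n
    · have : j = i := Fin.ext (by omega)
      subst this
      rw [if_pos hj, if_pos le_rfl, if_pos le_rfl]; ring
    · have hjlt : (j : ℕ) < (i : ℕ) := by have := j.isLt; omega
      rw [if_neg hj, if_neg (by simp only [Fin.le_def]; omega),
        if_pos (by simp only [Fin.le_def]; omega)]
      ring

lemma Nmat_det : ∀ n : ℕ, 1 ≤ n → (Nmat n).det = 3 - 2 * X ^ n := by
  intro n
  induction n with
  | zero => omega
  | succ n ih =>
    intro _
    by_cases hn0 : n = 0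
    · subst hn0
      rw [show (Nmat 1).det = Nmat 1 0 0 from Matrix.det_fin_one _]
      simp [Nmat]
    · have hn1 : 1 ≤ n := by omega
      rw [Matrix.det_succ_column_zero]
      have hterm : ∀ i : Fin (n+1),
          (-1 : RR) ^ (i : ℕ) * Nmat (n+1) i 0 *
            ((Nmat (n+1)).submatrix i.succAbove Fin.succ).det =
          (if i = 0 then X * ((Nmat (n+1)).submatrix i.succAbove Fin.succ).det else 0) +
          (if i = Fin.last n then
            (-1 : RR) ^ (n : ℕ) * (3 - 3*X) * ((Nmat (n+1)).submatrix i.succAbove Fin.succ).det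
           else 0) := by
        intro i
        by_cases h0 : i = 0
        · subst h0
          rw [if_pos rfl, if_neg (by simp only [Fin.ext_iff, Fin.val_zero, Fin.val_last]; omega)]
          simp only [Nmat]
          rw [if_neg (by simp only [Fin.val_zero]; omega)]
          simp
        · rw [if_neg h0]
          have h0' : (i : ℕ) ≠ 0 := by
            simp only [Fin.ext_iff, Fin.val_zero] at h0; exact h0
          by_cases hl : i = Fin.last n
          · subst hl
            rw [if_pos rfl]
            simp only [Nmat]
            rw [if_pos (by simp only [Fin.val_last]),
              if_neg (by simp only [Fin.val_zero]; omega)]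
            simp only [Fin.val_last]
            ring
          · rw [if_neg hl]
            have hl' : (i : ℕ) ≠ n := by
              simp only [Fin.ext_iff, Fin.val_last] at hl; exact hl
            simp only [Nmat]
            rw [if_neg (by omega), if_neg (fun h => h0 h.symm),
              if_neg (by simp only [Fin.val_zero]; omega)]
            ring
      rw [Finset.sum_congr rfl (fun i _ => hterm i), Finset.sum_add_distrib,
        Finset.sum_ite_eq' _ (0 : Fin (n+1)), Finset.sum_ite_eq' _ (Fin.last n),
        if_pos (Finset.mem_univ _), if_pos (Finset.mem_univ _)]
      have hsub0 : (Nmat (n+1)).submatrix (Fin.succAbove 0) Fin.succ = Nmat n := by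
        ext i j
        simp only [Matrix.submatrix_apply, Fin.succAbove_zero, Nmat, Fin.val_succ,
          Fin.succ_inj, add_left_inj]
      have hsubL :
          ((Nmat (n+1)).submatrix (Fin.last n).succAbove Fin.succ).det = (-1 : RR) ^ n := by
        have hent : ∀ i j : Fin n,
            (Nmat (n+1)).submatrix (Fin.last n).succAbove Fin.succ i j =
            if (j : ℕ) + 1 = (i : ℕ) then X else if (j : ℕ) = (i : ℕ) then -1 else 0 := by
          intro i j
          simp only [Matrix.submatrix_apply, Fin.succAbove_last, Nmat, Fin.coe_castSucc,
            Fin.val_succ]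
          rw [if_neg (by have := i.isLt; omega)]
          by_cases h : (j : ℕ) + 1 = (i : ℕ)
          · rw [if_pos (by rw [Fin.ext_iff]; simpa using h), if_pos h]
          · rw [if_neg (fun hh => h (by simpa [Fin.ext_iff] using hh)), if_neg h]
            by_cases h2 : (j : ℕ) = (i : ℕ)
            · rw [if_pos (by omega), if_pos h2]
            · rw [if_neg (by omega), if_neg h2]
        rw [Matrix.det_of_lowerTriangular]
        · have : ∀ i : Fin n,
              (Nmat (n+1)).submatrix (Fin.last n).succAbove Fin.succ i i = -1 := by
            intro i
            rw [hent]
            rw [if_neg (by omega), if_pos rfl]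
          rw [Finset.prod_congr rfl (fun i _ => this i)]
          simp
        · intro i j hij
          have hij' : (i : ℕ) < (j : ℕ) := Fin.lt_def.mp hij
          rw [hent, if_neg (by omega), if_neg (by omega)]
      rw [hsub0, hsubL, ih hn1]
      have hpow : ((-1 : RR) ^ n) * ((-1 : RR) ^ n) = 1 := by
        rw [← pow_add]
        exact Even.neg_one_pow ⟨n, rfl⟩
      linear_combination (3 - 3*X : RR) * hpow

/-- `det (t·A'ₙ − B'ₙᵀ) = 3 − 2tⁿ` for the Seifert-matrix blocks of `K'_{n,m}`. -/
theorem det_tA'_sub_B't (n : ℕ) (hn : 1 ≤ n)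
    (A B : Matrix (Fin n) (Fin n) (Polynomial ℤ))
    (hA : ∀ i j, A i j = if i ≤ j then -2 else -3)
    (hB : ∀ i j, B i j = if i ≤ j then -3 else -2) :
    ((X : Polynomial ℤ) • A - B.transpose).det = 3 - 2 * X ^ n := by
  have hM : (X : Polynomial ℤ) • A - B.transpose = Mmat n := by
    ext i j
    simp [Mmat, hA, hB, Matrix.sub_apply, Matrix.smul_apply, Matrix.transpose_apply,
      smul_eq_mul]
  have h1 := congrArg Matrix.det (Emat_mul n)
  rw [Matrix.det_mul, Emat_det, one_mul] at h1
  rw [hM, h1, Nmat_det n hn]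
end

section
/- Let n ≥ 1 and let t denote the variable X of the polynomial ring ℤ[t]. Let A'_n and B'_n be the n×n matrices over ℤ[t] with entries (A'_n)_{ij} = −2 if i ≤ j and −3 if i > j, and (B'_n)_{ij} = −3 if i ≤ j and −2 if i > j. Then det(A'_n − t·B'_nᵀ) = 3tⁿ − 2 in ℤ[t]. -/
open Polynomial Matrix Finset

section Aux

variable (n : ℕ)

/-- Row-operation matrix: row `i` ↦ row `i` − row `i+1`. -/
private noncomputable def EE : Matrix (Fin n) (Fin n) (Polynomial ℤ) :=
  fun i j => (if j = i then 1 else 0) + (if (j : ℕ) = (i : ℕ) + 1 then -1 else 0)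

/-- Column-operation matrix: unitriangular with `X^(j-i)` above the diagonal. -/
private noncomputable def FF : Matrix (Fin n) (Fin n) (Polynomial ℤ) :=
  fun i j => if (i : ℕ) ≤ (j : ℕ) then X ^ ((j : ℕ) - (i : ℕ)) else 0

private lemma det_EE : (EE n).det = 1 := by
  rw [Matrix.det_of_upperTriangular (M := EE n) ?ht]
  · have : ∀ i : Fin n, EE n i i = 1 := by
      intro i; simp [EE]
    simp [this]
  · intro i j hji
    have hv : (j : ℕ) < (i : ℕ) := hji
    have h1 : ¬ (j = i) := by rw [Fin.ext_iff]; omega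
    have h2 : ¬ ((j : ℕ) = (i : ℕ) + 1) := by omega
    simp [EE, h1, h2]

private lemma det_FF : (FF n).det = 1 := by
  rw [Matrix.det_of_upperTriangular (M := FF n) ?ht]
  · have : ∀ i : Fin n, FF n i i = 1 := by intro i; simp [FF]
    simp [this]
  · intro i j hji
    have hv : (j : ℕ) < (i : ℕ) := hji
    have : ¬ ((i : ℕ) ≤ (j : ℕ)) := by omega
    simp [FF, this]

end Aux

/-- `det (A'ₙ − t·B'ₙᵀ) = 3tⁿ − 2` for the Seifert-matrix blocks of `K'_{n,m}`. -/
theorem det_A'_sub_tB't (n : ℕ) (hn : 1 ≤ n)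
    (A B : Matrix (Fin n) (Fin n) (Polynomial ℤ))
    (hA : ∀ i j, A i j = if i ≤ j then -2 else -3)
    (hB : ∀ i j, B i j = if i ≤ j then -3 else -2) :
    (A - (X : Polynomial ℤ) • B.transpose).det = 3 * X ^ n - 2 := by
  set M : Matrix (Fin n) (Fin n) (Polynomial ℤ) := A - (X : Polynomial ℤ) • B.transpose with hMdef
  -- closed form for the entries of M
  have hM : ∀ i j : Fin n, M i j =
      if i < j then 2 * X - 2 else if i = j then 3 * X - 2 else 3 * X - 3 := by
    intro i j
    have : M i j = A i j - X * B j i := by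
      simp [hMdef, Matrix.sub_apply, Matrix.smul_apply, Matrix.transpose_apply, smul_eq_mul]
    rw [this, hA, hB]
    rcases lt_trichotomy i j with h | h | h
    · have h1 : i ≤ j := le_of_lt h
      have h2 : ¬ (j ≤ i) := not_le_of_gt h
      have h3 : ¬ (i = j) := ne_of_lt h
      simp [h, h1, h2, h3]; ring
    · subst h
      simp [le_refl, lt_irrefl]; ring
    · have h1 : ¬ (i ≤ j) := not_le_of_gt h
      have h2 : j ≤ i := le_of_lt h
      have h3 : ¬ (i < j) := not_lt_of_gt h
      have h4 : ¬ (i = j) := (ne_of_lt h).symm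
      simp [h1, h2, h3, h4]; ring
  set P : Matrix (Fin n) (Fin n) (Polynomial ℤ) := EE n * M * FF n with hPdef
  -- the last index
  set L : Fin n := ⟨n - 1, by omega⟩ with hL
  -- entries of EE * M
  have hEM : ∀ i j : Fin n, (EE n * M) i j =
      M i j - (if h : (i : ℕ) + 1 < n then M ⟨(i : ℕ) + 1, h⟩ j else 0) := by
    intro i j
    rw [Matrix.mul_apply]
    have : ∀ l : Fin n, EE n i l * M l j =
        (if l = i then M l j else 0) +
        (if (l : ℕ) = (i : ℕ) + 1 then -M l j else 0) := by
      intro l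
      simp only [EE]
      by_cases h1 : l = i <;> by_cases h2 : (l : ℕ) = (i : ℕ) + 1 <;>
        simp [h1, h2] <;> ring
    rw [Finset.sum_congr rfl fun l _ => this l, Finset.sum_add_distrib]
    rw [Finset.sum_ite_eq' Finset.univ i (fun l => M l j)]
    simp only [Finset.mem_univ, if_true]
    congr 1
    by_cases h : (i : ℕ) + 1 < n
    · have : ∀ l : Fin n, ((l : ℕ) = (i : ℕ) + 1) ↔ l = (⟨(i : ℕ) + 1, h⟩ : Fin n) := by
        intro l; rw [Fin.ext_iff]
      rw [Finset.sum_congr rfl fun l _ => by rw [if_congr (this l) rfl rfl]]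
      rw [Finset.sum_ite_eq' Finset.univ (⟨(i : ℕ) + 1, h⟩ : Fin n) (fun l => -M l j)]
      simp [h]
    · have : ∀ l : Fin n, ¬ ((l : ℕ) = (i : ℕ) + 1) := by
        intro l hl; exact h (hl ▸ l.isLt)
      simp [this, h]
  -- P is lower triangular
  have hPzero : ∀ i j : Fin n, i < j → P i j = 0 := by
    intro i j hij
    have hi1 : (i : ℕ) + 1 < n := by
      have := Fin.lt_iff_val_lt_val.mp hij; have := j.isLt; omega
    set i' : Fin n := ⟨(i : ℕ) + 1, hi1⟩ with hi'
    have hrow : ∀ l : Fin n, (EE n * M) i l =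
        if l = i then 1 else if l = i' then -X else 0 := by
      intro l
      rw [hEM i l, dif_pos hi1, ← hi', hM, hM]
      rcases lt_trichotomy (l : ℕ) (i : ℕ) with h | h | h
      · have e1 : ¬ i < l := by rw [Fin.lt_iff_val_lt_val]; omega
        have e2 : ¬ i = l := by rw [Fin.ext_iff]; omega
        have e3 : ¬ i' < l := by rw [Fin.lt_iff_val_lt_val]; simp [hi']; omega
        have e4 : ¬ i' = l := by rw [Fin.ext_iff]; simp [hi']; omega
        have e5 : ¬ l = i := by rw [Fin.ext_iff]; omega
        have e6 : ¬ l = i' := by rw [Fin.ext_iff]; simp [hi']; omega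
        simp [e1, e2, e3, e4, e5, e6]
      · have e0 : l = i := by rw [Fin.ext_iff]; omega
        subst e0
        have e1 : ¬ (l : Fin n) < l := lt_irrefl _
        have e3 : ¬ i' < l := by rw [Fin.lt_iff_val_lt_val]; simp [hi']
        have e4 : ¬ i' = l := by rw [Fin.ext_iff]; simp [hi']
        simp [e1, e3, e4]; ring
      · rcases Nat.lt_or_ge (i : ℕ) ((l : ℕ) - 1) with h2 | h2
        · -- l > i + 1
          have e1 : i < l := by rw [Fin.lt_iff_val_lt_val]; omega
          have e3 : i' < l := by rw [Fin.lt_iff_val_lt_val]; simp [hi']; omega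
          have e5 : ¬ l = i := by rw [Fin.ext_iff]; omega
          have e6 : ¬ l = i' := by rw [Fin.ext_iff]; simp [hi']; omega
          simp [e1, e3, e5, e6]
        · -- l = i + 1, i.e. l = i'
          have e0 : l = i' := by rw [Fin.ext_iff]; simp [hi']; omega
          have e1 : i < l := by rw [Fin.lt_iff_val_lt_val]; omega
          have e5 : ¬ l = i := by rw [Fin.ext_iff]; omega
          subst e0
          have e3 : ¬ i' < i' := lt_irrefl _
          simp [e1, e3, e5]; ring
    have : P i j = (if (i : ℕ) ≤ (j : ℕ) then X ^ ((j : ℕ) - (i : ℕ)) else 0)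
        + (-X) * (if (i' : ℕ) ≤ (j : ℕ) then X ^ ((j : ℕ) - (i' : ℕ)) else 0) := by
      rw [hPdef, Matrix.mul_apply]
      have term : ∀ l : Fin n, (EE n * M) i l * FF n l j =
          (if l = i then FF n i j else 0) + (if l = i' then (-X) * FF n i' j else 0) := by
        intro l
        rw [hrow l]
        have hii' : i ≠ i' := Fin.ne_of_val_ne (by simp [hi'])
        by_cases h1 : l = i
        · subst h1; simp [hii']
        · by_cases h2 : l = i'
          · subst h2; simp [h1]
          · simp [h1, h2]
      rw [Finset.sum_congr rfl fun l _ => term l, Finset.sum_add_distrib,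
        Finset.sum_ite_eq' Finset.univ i (fun _ => FF n i j),
        Finset.sum_ite_eq' Finset.univ i' (fun _ => (-X) * FF n i' j)]
      simp [FF]
    rw [this]
    have hij' : (i : ℕ) < (j : ℕ) := Fin.lt_iff_val_lt_val.mp hij
    have c1 : (i : ℕ) ≤ (j : ℕ) := le_of_lt hij'
    have c2 : (i' : ℕ) ≤ (j : ℕ) := by simp [hi']; omega
    rw [if_pos c1, if_pos c2]
    have : (j : ℕ) - (i : ℕ) = ((j : ℕ) - ((i' : ℕ))) + 1 := by simp [hi']; omega
    rw [this, pow_succ]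
    ring
  -- the diagonal entries of P, away from the last one
  have hPdiag : ∀ i : Fin n, (i : ℕ) + 1 < n → P i i = 1 := by
    intro i hi1
    set i' : Fin n := ⟨(i : ℕ) + 1, hi1⟩ with hi'
    have hrow : ∀ l : Fin n, (EE n * M) i l =
        if l = i then 1 else if l = i' then -X else 0 := by
      intro l
      rw [hEM i l, dif_pos hi1, ← hi', hM, hM]
      rcases lt_trichotomy (l : ℕ) (i : ℕ) with h | h | h
      · have e1 : ¬ i < l := by rw [Fin.lt_iff_val_lt_val]; omega
        have e2 : ¬ i = l := by rw [Fin.ext_iff]; omega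
        have e3 : ¬ i' < l := by rw [Fin.lt_iff_val_lt_val]; simp [hi']; omega
        have e4 : ¬ i' = l := by rw [Fin.ext_iff]; simp [hi']; omega
        have e5 : ¬ l = i := by rw [Fin.ext_iff]; omega
        have e6 : ¬ l = i' := by rw [Fin.ext_iff]; simp [hi']; omega
        simp [e1, e2, e3, e4, e5, e6]
      · have e0 : l = i := by rw [Fin.ext_iff]; omega
        subst e0
        have e1 : ¬ (l : Fin n) < l := lt_irrefl _
        have e3 : ¬ i' < l := by rw [Fin.lt_iff_val_lt_val]; simp [hi']
        have e4 : ¬ i' = l := by rw [Fin.ext_iff]; simp [hi']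
        simp [e1, e3, e4]; ring
      · rcases Nat.lt_or_ge (i : ℕ) ((l : ℕ) - 1) with h2 | h2
        · have e1 : i < l := by rw [Fin.lt_iff_val_lt_val]; omega
          have e3 : i' < l := by rw [Fin.lt_iff_val_lt_val]; simp [hi']; omega
          have e5 : ¬ l = i := by rw [Fin.ext_iff]; omega
          have e6 : ¬ l = i' := by rw [Fin.ext_iff]; simp [hi']; omega
          simp [e1, e3, e5, e6]
        · have e0 : l = i' := by rw [Fin.ext_iff]; simp [hi']; omega
          have e1 : i < l := by rw [Fin.lt_iff_val_lt_val]; omega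
          have e5 : ¬ l = i := by rw [Fin.ext_iff]; omega
          subst e0
          have e3 : ¬ i' < i' := lt_irrefl _
          simp [e1, e3, e5]; ring
    have : P i i = (if (i : ℕ) ≤ (i : ℕ) then X ^ ((i : ℕ) - (i : ℕ)) else 0)
        + (-X) * (if (i' : ℕ) ≤ (i : ℕ) then X ^ ((i : ℕ) - (i' : ℕ)) else 0) := by
      rw [hPdef, Matrix.mul_apply]
      have term : ∀ l : Fin n, (EE n * M) i l * FF n l i =
          (if l = i then FF n i i else 0) + (if l = i' then (-X) * FF n i' i else 0) := by
        intro l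
        rw [hrow l]
        have hii' : i ≠ i' := Fin.ne_of_val_ne (by simp [hi'])
        by_cases h1 : l = i
        · subst h1; simp [hii']
        · by_cases h2 : l = i'
          · subst h2; simp [h1]
          · simp [h1, h2]
      rw [Finset.sum_congr rfl fun l _ => term l, Finset.sum_add_distrib,
        Finset.sum_ite_eq' Finset.univ i (fun _ => FF n i i),
        Finset.sum_ite_eq' Finset.univ i' (fun _ => (-X) * FF n i' i)]
      simp [FF]
    rw [this]
    have c2 : ¬ ((i' : ℕ) ≤ (i : ℕ)) := by simp [hi']
    simp [c2]
  -- the last diagonal entry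
  have hPlast : P L L = 3 * X ^ n - 2 := by
    have hrow : ∀ l : Fin n, (EE n * M) L l = M L l := by
      intro l
      rw [hEM L l]
      have : ¬ ((L : ℕ) + 1 < n) := by simp [hL]; omega
      rw [dif_neg this]; ring
    have hMlast : ∀ l : Fin n, M L l = if l = L then 3 * X - 2 else 3 * X - 3 := by
      intro l
      rw [hM]
      have hl : (l : ℕ) ≤ (L : ℕ) := by
        have := l.isLt; simp [hL]; omega
      have e1 : ¬ L < l := by rw [Fin.lt_iff_val_lt_val]; omega
      by_cases h : l = L
      · subst h; simp
      · have e2 : ¬ L = l := fun hh => h hh.symm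
        simp [e1, e2, h]
    have hstep : P L L = ∑ l : Fin n, (if l = L then 3 * X - 2 else 3 * X - 3)
        * (X : Polynomial ℤ) ^ ((n - 1) - (l : ℕ)) := by
      rw [hPdef, Matrix.mul_apply]
      refine Finset.sum_congr rfl fun l _ => ?_
      rw [hrow l, hMlast l]
      have : (l : ℕ) ≤ (L : ℕ) := by have := l.isLt; simp [hL]; omega
      simp only [FF, hL]
      rw [if_pos this]
    rw [hstep]
    have split : ∀ l : Fin n, (if l = L then 3 * X - 2 else 3 * X - 3)
        * (X : Polynomial ℤ) ^ ((n - 1) - (l : ℕ))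
        = (3 * X - 3) * (X : Polynomial ℤ) ^ ((n - 1) - (l : ℕ))
          + (if l = L then (X : Polynomial ℤ) ^ ((n - 1) - (l : ℕ)) else 0) := by
      intro l
      by_cases h : l = L <;> simp [h] <;> ring
    rw [Finset.sum_congr rfl fun l _ => split l, Finset.sum_add_distrib,
      Finset.sum_ite_eq' Finset.univ L (fun l => (X : Polynomial ℤ) ^ ((n - 1) - (l : ℕ)))]
    simp only [Finset.mem_univ, if_true]
    have hLexp : (n - 1) - (L : ℕ) = 0 := by simp [hL]
    rw [hLexp, pow_zero, ← Finset.mul_sum]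
    have hsum : ∑ l : Fin n, (X : Polynomial ℤ) ^ ((n - 1) - (l : ℕ))
        = ∑ l ∈ Finset.range n, (X : Polynomial ℤ) ^ l := by
      rw [Fin.sum_univ_eq_sum_range (fun l => (X : Polynomial ℤ) ^ ((n - 1) - l)) n]
      exact Finset.sum_range_reflect (fun l => (X : Polynomial ℤ) ^ l) n
    rw [hsum]
    have geo : (∑ l ∈ Finset.range n, (X : Polynomial ℤ) ^ l) * (X - 1) = X ^ n - 1 :=
      geom_sum_mul X n
    calc (3 * X - 3) * ∑ l ∈ Finset.range n, (X : Polynomial ℤ) ^ l + 1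
        = 3 * ((∑ l ∈ Finset.range n, (X : Polynomial ℤ) ^ l) * (X - 1)) + 1 := by ring
      _ = 3 * (X ^ n - 1) + 1 := by rw [geo]
      _ = 3 * X ^ n - 2 := by ring
  -- put everything together
  have hPtri : P.BlockTriangular OrderDual.toDual := by
    intro i j h
    exact hPzero i j h
  have hdetP : P.det = ∏ i : Fin n, P i i := Matrix.det_of_lowerTriangular P hPtri
  have hprod : ∏ i : Fin n, P i i = 3 * X ^ n - 2 := by
    rw [Finset.prod_eq_single L (fun i _ hi => hPdiag i (by
      have := i.isLt
      have : (i : ℕ) ≠ n - 1 := fun h => hi (by rw [Fin.ext_iff, hL]; exact h)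
      omega)) (fun h => absurd (Finset.mem_univ L) h)]
    exact hPlast
  have : P.det = M.det := by
    rw [hPdef, Matrix.det_mul, Matrix.det_mul, det_EE, det_FF]
    ring
  rw [← this, hdetP, hprod]
end

section
/- Let n ≥ 1 and let t denote the variable X of the polynomial ring ℤ[t]. Let A'_n and B'_n be the n×n matrices over ℤ[t] with entries (A'_n)_{ij} = −2 if i ≤ j and −3 if i > j, and (B'_n)_{ij} = −3 if i ≤ j and −2 if i > j, and let S'_n be the 2n×2n block matrix [[0, A'_n],[B'_n, 0]]. Then det(t·S'_n − S'_nᵀ) = (3 − 2tⁿ)·(3tⁿ − 2) = −(6t^{2n} − 13tⁿ + 6) in ℤ[t]. -/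
open Polynomial Matrix

variable {R : Type*} [CommRing R]

/-- Matrix with `x` above the diagonal, `d` on it, `y` below it. -/
def triM (n : ℕ) (x d y : R) : Matrix (Fin n) (Fin n) R :=
  Matrix.of fun i j => if (i : ℕ) < j then x else if (i : ℕ) = j then d else y

/-- Row-reduced form of `triM`. -/
def triT (n : ℕ) (x d y : R) : Matrix (Fin n) (Fin n) R :=
  Matrix.of fun i j =>
    if (i : ℕ) = n - 1 then (if (j : ℕ) = n - 1 then d else y)
    else if (j : ℕ) = i then d - y else if (j : ℕ) = (i : ℕ) + 1 then x - d else 0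

/-- Elementary row-operation matrix: subtract row `i+1` from row `i`. -/
def triE (R : Type*) [CommRing R] (n : ℕ) : Matrix (Fin n) (Fin n) R :=
  Matrix.of fun i j => (if j = i then (1 : R) else 0) + (if (j : ℕ) = (i : ℕ) + 1 then -1 else 0)

lemma triE_mul (n : ℕ) (x d y : R) : triE R n * triM n x d y = triT n x d y := by
  ext i j
  rw [Matrix.mul_apply]
  simp only [triE, triM, triT, Matrix.of_apply, add_mul, ite_mul, one_mul, zero_mul,
    neg_one_mul, Finset.sum_add_distrib]
  rw [Finset.sum_ite_eq' Finset.univ i fun k => (if (k : ℕ) < j then x else if (k : ℕ) = j then d else y)]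
  simp only [Finset.mem_univ, if_true]
  by_cases h : (i : ℕ) + 1 < n
  · have hk : ∀ k : Fin n, ((k : ℕ) = (i : ℕ) + 1) = (k = ⟨(i : ℕ) + 1, h⟩) := by
      intro k; simp [Fin.ext_iff]
    simp only [hk]
    rw [Finset.sum_ite_eq' Finset.univ (⟨(i : ℕ) + 1, h⟩ : Fin n)
      fun k => -(if (k : ℕ) < j then x else if (k : ℕ) = j then d else y)]
    simp only [Finset.mem_univ, if_true]
    have hi : (i : ℕ) ≠ n - 1 := by omega
    have hjlt := j.isLt
    split_ifs <;> first | rfl | ring1 | (exfalso; first | assumption | omega | (simp only [Fin.ext_iff, Fin.val_mk, Fin.val_last] at *; omega))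
  · have hi : (i : ℕ) = n - 1 := by have := i.isLt; omega
    have : ∀ k : Fin n, ¬ ((k : ℕ) = (i : ℕ) + 1) := by intro k; have := k.isLt; omega
    simp only [this, if_false, Finset.sum_const_zero, add_zero]
    have hij : ¬ ((i : ℕ) < j) := by have := j.isLt; omega
    have hjlt := j.isLt
    have hilt := i.isLt
    split_ifs <;> first | rfl | ring1 | (exfalso; first | assumption | omega | (simp only [Fin.ext_iff, Fin.val_mk, Fin.val_last] at *; omega))

lemma triE_det (n : ℕ) : (triE R n).det = 1 := by
  have h : (triE R n).BlockTriangular id := by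
    intro i j hji
    simp only [id] at hji
    have h1 : ¬ (j = i) := by exact fun h => absurd h (Fin.ne_of_lt hji)
    have h2 : ¬ ((j : ℕ) = (i : ℕ) + 1) := by
      have := (Fin.lt_def.mp hji); omega
    simp [triE, h1, h2]
  rw [Matrix.det_of_upperTriangular h]
  have : ∀ i : Fin n, triE R n i i = 1 := by
    intro i; simp [triE]
  simp [this]

lemma triT_det (x d y : R) : ∀ n : ℕ,
    (triT (n + 1) x d y).det * (x - y) = x * (d - y) ^ (n + 1) - y * (d - x) ^ (n + 1) := by
  intro n
  induction n with
  | zero =>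
    rw [show (triT 1 x d y).det = d by rw [Matrix.det_fin_one]; simp [triT]]
    ring
  | succ n ih =>
    have hexp := Matrix.det_succ_column_zero (triT (n + 2) x d y)
    rw [Fin.sum_univ_succ] at hexp
    have hmid : (∑ i : Fin (n + 1), (-1 : R) ^ ((i.succ : Fin (n+2)) : ℕ) * triT (n + 2) x d y i.succ 0 *
          ((triT (n + 2) x d y).submatrix (Fin.succAbove i.succ) Fin.succ).det)
        = (-1 : R) ^ (((Fin.last n).succ : Fin (n+2)) : ℕ) * triT (n + 2) x d y (Fin.last n).succ 0 *
          ((triT (n + 2) x d y).submatrix (Fin.succAbove (Fin.last n).succ) Fin.succ).det := by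
      apply Finset.sum_eq_single
      · intro b _ hb
        have hbn : (b : ℕ) < n := by
          have h1 : (b : ℕ) < n + 1 := b.isLt
          rcases lt_or_eq_of_le (Nat.lt_succ_iff.mp h1) with h | h
          · exact h
          · exact absurd (Fin.ext h : b = Fin.last n) hb
        have hz : triT (n + 2) x d y b.succ 0 = 0 := by
          simp only [triT, Matrix.of_apply, Fin.val_succ, Fin.val_zero]
          split_ifs <;> first | rfl | ring1 | (exfalso; first | assumption | omega | (simp only [Fin.ext_iff, Fin.val_mk, Fin.val_last] at *; omega))
        rw [hz]; ring
      · intro h; exact absurd (Finset.mem_univ _) h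
    rw [hmid] at hexp
    have h0 : (triT (n + 2) x d y).submatrix (Fin.succAbove 0) Fin.succ
        = triT (n + 1) x d y := by
      rw [Fin.succAbove_zero]
      ext i j
      simp only [Matrix.submatrix_apply, triT, Matrix.of_apply, Fin.val_succ]
      split_ifs <;> first | rfl | ring1 | (exfalso; first | assumption | omega | (simp only [Fin.ext_iff, Fin.val_mk, Fin.val_last] at *; omega))
    have hlast : ((triT (n + 2) x d y).submatrix (Fin.succAbove (Fin.last n).succ) Fin.succ).det
        = (x - d) ^ (n + 1) := by
      rw [Fin.succ_last, Fin.succAbove_last]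
      have hlt : ((triT (n + 2) x d y).submatrix Fin.castSucc Fin.succ).BlockTriangular
          OrderDual.toDual := by
        intro i j hji
        have hij : (i : ℕ) < (j : ℕ) := hji
        simp only [Matrix.submatrix_apply, triT, Matrix.of_apply, Fin.val_succ,
          Fin.coe_castSucc]
        have hilt := i.isLt
        split_ifs <;> first | rfl | ring1 | (exfalso; first | assumption | omega | (simp only [Fin.ext_iff, Fin.val_mk, Fin.val_last] at *; omega))
      rw [Matrix.det_of_lowerTriangular _ hlt]
      have hd : ∀ i : Fin (n + 1),
          ((triT (n + 2) x d y).submatrix Fin.castSucc Fin.succ) i i = x - d := by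
        intro i
        simp only [Matrix.submatrix_apply, triT, Matrix.of_apply, Fin.val_succ,
          Fin.coe_castSucc]
        have hilt := i.isLt
        split_ifs <;> first | rfl | ring1 | (exfalso; first | assumption | omega | (simp only [Fin.ext_iff, Fin.val_mk, Fin.val_last] at *; omega))
      simp only [hd]
      rw [Finset.prod_const]
      simp
    have e0 : triT (n + 2) x d y 0 0 = d - y := by
      simp only [triT, Matrix.of_apply, Fin.val_zero]
      split_ifs <;> first | rfl | ring1 | (exfalso; first | assumption | omega | (simp only [Fin.ext_iff, Fin.val_mk, Fin.val_last] at *; omega))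
    have elast : triT (n + 2) x d y (Fin.last n).succ 0 = y := by
      simp only [triT, Matrix.of_apply, Fin.val_succ, Fin.val_last, Fin.val_zero]
      split_ifs <;> first | rfl | ring1 | (exfalso; first | assumption | omega | (simp only [Fin.ext_iff, Fin.val_mk, Fin.val_last] at *; omega))
    rw [e0, elast, h0, hlast] at hexp
    have hsuccval : (((Fin.last n).succ : Fin (n+2)) : ℕ) = n + 1 := by simp
    rw [hsuccval] at hexp
    have hneg : (d - x) ^ (n + 1) = (-1 : R) ^ (n + 1) * (x - d) ^ (n + 1) := by
      rw [← neg_pow, neg_sub]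
    have h00 : (((0 : Fin (n+2))) : ℕ) = 0 := rfl
    rw [h00, pow_zero, one_mul] at hexp
    rw [hneg] at ih
    rw [hexp, pow_succ (d - y) (n+1), pow_succ (d - x) (n+1), hneg]
    linear_combination (d - y) * ih

lemma triM_det (n : ℕ) (hn : 1 ≤ n) (x d y s r : R) (hs : d - y = s) (hr : d - x = r) :
    (triM n x d y).det * (x - y) = x * s ^ n - y * r ^ n := by
  subst hs hr
  obtain ⟨m, rfl⟩ : ∃ m, n = m + 1 := ⟨n - 1, by omega⟩
  have h := triE_mul (m + 1) x d y
  have hdet : (triM (m + 1) x d y).det = (triT (m + 1) x d y).det := by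
    rw [← h, Matrix.det_mul, triE_det, one_mul]
  rw [hdet]
  exact triT_det x d y m

lemma det_fromBlocks_antidiag {n : ℕ} (M N : Matrix (Fin n) (Fin n) R) :
    (Matrix.fromBlocks 0 M N 0).det = (-1) ^ n * (M.det * N.det) := by
  have hJ : (Matrix.fromBlocks 0 1 1 0 : Matrix (Fin n ⊕ Fin n) (Fin n ⊕ Fin n) R)
      = (Matrix.fromBlocks 1 1 0 1 : Matrix (Fin n ⊕ Fin n) (Fin n ⊕ Fin n) R) *
        ((Matrix.fromBlocks 1 0 (-1) 1 : Matrix (Fin n ⊕ Fin n) (Fin n ⊕ Fin n) R) *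
        ((Matrix.fromBlocks 1 1 0 1 : Matrix (Fin n ⊕ Fin n) (Fin n ⊕ Fin n) R) *
         (Matrix.fromBlocks (-1) 0 0 1 : Matrix (Fin n ⊕ Fin n) (Fin n ⊕ Fin n) R))) := by
    simp [Matrix.fromBlocks_multiply, Matrix.mul_one, Matrix.one_mul, Matrix.mul_zero,
      Matrix.zero_mul, Matrix.neg_mul, Matrix.mul_neg]
  have hfac : Matrix.fromBlocks (0 : Matrix (Fin n) (Fin n) R) M N 0
      = Matrix.fromBlocks M 0 0 N *
        (Matrix.fromBlocks 0 1 1 0 : Matrix (Fin n ⊕ Fin n) (Fin n ⊕ Fin n) R) := by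
    simp only [Matrix.fromBlocks_multiply]
    norm_num
  have hdetJ : (Matrix.fromBlocks 0 1 1 0 : Matrix (Fin n ⊕ Fin n) (Fin n ⊕ Fin n) R).det
      = (-1) ^ n := by
    rw [hJ, Matrix.det_mul, Matrix.det_mul, Matrix.det_mul]
    rw [Matrix.det_fromBlocks_zero₂₁, Matrix.det_fromBlocks_zero₁₂,
      Matrix.det_fromBlocks_zero₂₁]
    simp [Matrix.det_neg]
  rw [hfac, Matrix.det_mul, Matrix.det_fromBlocks_zero₂₁, hdetJ]
  ring

/-- `det (t·S'ₙ − S'ₙᵀ) = (3 − 2tⁿ)(3tⁿ − 2) = −(6t^{2n} − 13tⁿ + 6)` for the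
Seifert matrix `S'ₙ = [[0, A'ₙ],[B'ₙ, 0]]` of `K'_{n,m}`. -/
theorem det_Seifert' (n : ℕ) (hn : 1 ≤ n)
    (A B : Matrix (Fin n) (Fin n) (Polynomial ℤ))
    (hA : ∀ i j, A i j = if i ≤ j then -2 else -3)
    (hB : ∀ i j, B i j = if i ≤ j then -3 else -2)
    (S : Matrix (Fin n ⊕ Fin n) (Fin n ⊕ Fin n) (Polynomial ℤ))
    (hS : S = Matrix.fromBlocks 0 A B 0) :
    ((X : Polynomial ℤ) • S - S.transpose).det = (3 - 2 * X ^ n) * (3 * X ^ n - 2) ∧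
    (3 - 2 * (X : Polynomial ℤ) ^ n) * (3 * X ^ n - 2) = -(6 * X ^ (2 * n) - 13 * X ^ n + 6) := by
  subst hS
  constructor
  · have hSplit : (X : Polynomial ℤ) • Matrix.fromBlocks 0 A B 0
        - (Matrix.fromBlocks 0 A B 0).transpose
        = Matrix.fromBlocks 0 ((X : Polynomial ℤ) • A - B.transpose) ((X : Polynomial ℤ) • B - A.transpose) 0 := by
      ext (i | i) (j | j) <;>
        simp [Matrix.fromBlocks, Matrix.sub_apply, Matrix.smul_apply, Matrix.transpose_apply]
    rw [hSplit, det_fromBlocks_antidiag]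
    have hM1 : (X : Polynomial ℤ) • A - B.transpose
        = triM n (-2 * X + 2) (-2 * X + 3) (-3 * X + 3) := by
      refine Matrix.ext fun i j => ?_
      simp only [Matrix.sub_apply, Matrix.smul_apply, Matrix.transpose_apply, hA, hB,
        triM, Matrix.of_apply, smul_eq_mul, Fin.le_def, Fin.lt_def]
      split_ifs <;> first | ring1 | (exfalso; simp only [Fin.le_def, Fin.lt_def, Fin.ext_iff] at *; omega)
    have hM2 : (X : Polynomial ℤ) • B - A.transpose
        = triM n (-3 * X + 3) (-3 * X + 2) (-2 * X + 2) := by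
      refine Matrix.ext fun i j => ?_
      simp only [Matrix.sub_apply, Matrix.smul_apply, Matrix.transpose_apply, hA, hB,
        triM, Matrix.of_apply, smul_eq_mul, Fin.le_def, Fin.lt_def]
      split_ifs <;> first | ring1 | (exfalso; simp only [Fin.le_def, Fin.lt_def, Fin.ext_iff] at *; omega)
    have hd1 := triM_det n hn (-2 * X + 2 : Polynomial ℤ) (-2 * X + 3) (-3 * X + 3) X 1
      (by ring) (by ring)
    have hd2 := triM_det n hn (-3 * X + 3 : Polynomial ℤ) (-3 * X + 2) (-2 * X + 2) (-X) (-1)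
      (by ring) (by ring)
    have hX1 : (X - 1 : Polynomial ℤ) ≠ 0 := by
      intro h
      have := congrArg (Polynomial.eval 0) h
      simp at this
    have hX2 : (1 - X : Polynomial ℤ) ≠ 0 := by
      intro h
      have := congrArg (Polynomial.eval 0) h
      simp at this
    have hdet1 : (triM n (-2 * X + 2 : Polynomial ℤ) (-2 * X + 3) (-3 * X + 3)).det
        = 3 - 2 * X ^ n := by
      apply mul_right_cancel₀ hX1
      calc (triM n (-2 * X + 2 : Polynomial ℤ) (-2 * X + 3) (-3 * X + 3)).det * (X - 1)
          = (triM n (-2 * X + 2 : Polynomial ℤ) (-2 * X + 3) (-3 * X + 3)).det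
            * ((-2 * X + 2) - (-3 * X + 3)) := by ring_nf
        _ = (-2 * X + 2) * X ^ n - (-3 * X + 3) * 1 ^ n := hd1
        _ = (3 - 2 * X ^ n) * (X - 1) := by rw [one_pow]; ring
    have hdet2 : (triM n (-3 * X + 3 : Polynomial ℤ) (-3 * X + 2) (-2 * X + 2)).det
        = (-1) ^ n * (3 * X ^ n - 2) := by
      apply mul_right_cancel₀ hX2
      rw [neg_pow (X : Polynomial ℤ) n] at hd2
      calc (triM n (-3 * X + 3 : Polynomial ℤ) (-3 * X + 2) (-2 * X + 2)).det * (1 - X)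
          = (triM n (-3 * X + 3 : Polynomial ℤ) (-3 * X + 2) (-2 * X + 2)).det
            * ((-3 * X + 3) - (-2 * X + 2)) := by ring_nf
        _ = (-3 * X + 3) * ((-1) ^ n * X ^ n) - (-2 * X + 2) * (-1) ^ n := hd2
        _ = (-1) ^ n * (3 * X ^ n - 2) * (1 - X) := by ring
    rw [hM1, hM2, hdet1, hdet2]
    have hsq : ((-1 : Polynomial ℤ)) ^ n * (-1) ^ n = 1 := by
      rw [← pow_add]
      exact Even.neg_one_pow ⟨n, by ring⟩
    linear_combination (3 - 2 * (X : Polynomial ℤ) ^ n) * (3 * X ^ n - 2) * hsq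
  · rw [show 2 * n = n + n from by ring, pow_add]
    ring
end
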